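/- Let E ⊂ ℝ^n be nonempty and compact, m ∈ {1,…,n} and θ ∈ (0,1]. (i) For every 0 < r < 1 and all 0 ≤ t ≤ s ≤ m, −(s−t) ≤ ((log C_{r,θ}^{s,m}(E))/(−log r) − s) − ((log C_{r,θ}^{t,m}(E))/(−log r) − t) ≤ −θ(s−t). (ii) There is a unique s ∈ [0,m] such that liminf_{r→0} (log C_{r,θ}^{s,m}(E))/(−log r) = s, and a unique s ∈ [0,m] such that limsup_{r→0} (log C_{r,θ}^{s,m}(E))/(−log r) = s. -/

import Mathlib

open MeasureTheory Metric Set Filter Topology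
open scoped ENNReal NNReal

noncomputable section

/-- Euclidean space `ℝ^n`. -/
abbrev Euc (n : ℕ) := EuclideanSpace ℝ (Fin n)

instance matrixMeasurableSpace (n : ℕ) : MeasurableSpace (Matrix (Fin n) (Fin n) ℝ) :=
  inferInstanceAs (MeasurableSpace (Fin n → Fin n → ℝ))

/-- The restricted covering sum `S_{r,θ}^s(E)`: the infimum of `Σ_i |U_i|^s` over all
countable covers `{U_i}` of `E` with `r ≤ |U_i| ≤ r^θ`, valued in `ℝ≥0∞`. -/
def coverSum (n : ℕ) (E : Set (Euc n)) (θ s r : ℝ) : ℝ≥0∞ :=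
  sInf { T : ℝ≥0∞ | ∃ 𝒰 : Set (Set (Euc n)), 𝒰.Countable ∧ E ⊆ ⋃₀ 𝒰 ∧
    (∀ U ∈ 𝒰, r ≤ diam U ∧ diam U ≤ r ^ θ) ∧
    T = ∑' U : 𝒰, ENNReal.ofReal (diam (U : Set (Euc n)) ^ s) }

/-- Real-valued version of `coverSum`. -/
def Sval (n : ℕ) (E : Set (Euc n)) (θ s r : ℝ) : ℝ := (coverSum n E θ s r).toReal

/-- The quotient `log S_{r,θ}^s(E) / (-log r)`. -/
def Squot (n : ℕ) (E : Set (Euc n)) (θ s r : ℝ) : ℝ :=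
  Real.log (Sval n E θ s r) / (-Real.log r)

/-- `N_δ(E)`: the smallest number of sets of diameter at most `δ` needed to cover `E`. -/
def covNum (n : ℕ) (E : Set (Euc n)) (δ : ℝ) : ℕ :=
  sInf { k : ℕ | ∃ U : Fin k → Set (Euc n), E ⊆ ⋃ i, U i ∧ ∀ i, diam (U i) ≤ δ }

/-- The lower box-counting dimension of `E`. -/
def lowerBoxDim (n : ℕ) (E : Set (Euc n)) : ℝ :=
  liminf (fun δ : ℝ => Real.log (covNum n E δ) / (-Real.log δ)) (𝓝[>] 0)

/-- The upper box-counting dimension of `E`. -/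
def upperBoxDim (n : ℕ) (E : Set (Euc n)) : ℝ :=
  limsup (fun δ : ℝ => Real.log (covNum n E δ) / (-Real.log δ)) (𝓝[>] 0)

/-- The kernel `φ_{r,θ}^{s,m}`. -/
def phiK (n : ℕ) (m s θ r : ℝ) (x : Euc n) : ℝ :=
  if ‖x‖ < r then 1
  else if ‖x‖ < r ^ θ then (r / ‖x‖) ^ s
  else r ^ (θ * (m - s) + s) / ‖x‖ ^ m

/-- The kernel `φ̃_{r,θ}^s`. -/
def phiT (n : ℕ) (s θ r : ℝ) (x : Euc n) : ℝ :=
  if ‖x‖ < r then 1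
  else if ‖x‖ ≤ r ^ θ then (r / ‖x‖) ^ s
  else 0

/-- The kernel `φ_r^m(x) = min{1, (r/|x|)^m}`. -/
def phiB (n : ℕ) (m r : ℝ) (x : Euc n) : ℝ :=
  if ‖x‖ ≤ r then 1 else (r / ‖x‖) ^ m

/-- The energy `∬ φ(x-y) dμ(x)dμ(y)` of a measure with respect to a kernel `φ`. -/
def energy (n : ℕ) (φ : Euc n → ℝ) (μ : Measure (Euc n)) : ℝ :=
  ∫ x, ∫ y, φ (x - y) ∂μ ∂μ

/-- The potential `∫ φ(x-y) dμ(y)` of a measure at `x` with respect to a kernel `φ`. -/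
def potential (n : ℕ) (φ : Euc n → ℝ) (μ : Measure (Euc n)) (x : Euc n) : ℝ :=
  ∫ y, φ (x - y) ∂μ

/-- `μ` is a Borel probability measure supported on `E`. -/
def PMeasOn (n : ℕ) (E : Set (Euc n)) (μ : Measure (Euc n)) : Prop :=
  IsProbabilityMeasure μ ∧ μ Eᶜ = 0

/-- The capacity `C_{r,θ}^{s,m}(E)`: the reciprocal of the infimal energy of Borel
probability measures supported on `E` with respect to the kernel `φ_{r,θ}^{s,m}`. -/
def capacity (n : ℕ) (m s θ r : ℝ) (E : Set (Euc n)) : ℝ :=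
  (sInf { e : ℝ | ∃ μ : Measure (Euc n), PMeasOn n E μ ∧ e = energy n (phiK n m s θ r) μ })⁻¹

/-- The quotient `log C_{r,θ}^{s,m}(E) / (-log r)`. -/
def Cquot (n : ℕ) (m s θ : ℝ) (E : Set (Euc n)) (r : ℝ) : ℝ :=
  Real.log (capacity n m s θ r E) / (-Real.log r)

/-- `d` is the lower intermediate dimension `\underline{dim}_θ E`, i.e. the unique
`s ∈ [0,n]` such that `liminf_{r→0} log S_{r,θ}^s(E) / (-log r) = 0`. -/
def IsLowerInterDim (n : ℕ) (θ : ℝ) (E : Set (Euc n)) (d : ℝ) : Prop :=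
  d ∈ Icc (0:ℝ) n ∧ liminf (fun r => Squot n E θ d r) (𝓝[>] 0) = 0

/-- `d` is the upper intermediate dimension `\overline{dim}_θ E`. -/
def IsUpperInterDim (n : ℕ) (θ : ℝ) (E : Set (Euc n)) (d : ℝ) : Prop :=
  d ∈ Icc (0:ℝ) n ∧ limsup (fun r => Squot n E θ d r) (𝓝[>] 0) = 0

/-- `d` is the lower intermediate dimension profile `\underline{dim}_θ^m E`, i.e. the unique
`s ∈ [0,m]` such that `liminf_{r→0} log C_{r,θ}^{s,m}(E) / (-log r) = s`; for bounded sets the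
capacity is that of the closure. -/
def IsLowerDimProfile (n m : ℕ) (θ : ℝ) (E : Set (Euc n)) (d : ℝ) : Prop :=
  d ∈ Icc (0:ℝ) m ∧ liminf (fun r => Cquot n m d θ (closure E) r) (𝓝[>] 0) = d

/-- `d` is the upper intermediate dimension profile `\overline{dim}_θ^m E`. -/
def IsUpperDimProfile (n m : ℕ) (θ : ℝ) (E : Set (Euc n)) (d : ℝ) : Prop :=
  d ∈ Icc (0:ℝ) m ∧ limsup (fun r => Cquot n m d θ (closure E) r) (𝓝[>] 0) = d

/-- `P` is the matrix of an orthogonal projection of `ℝ^n` onto an `m`-dimensional subspace;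
such matrices parametrise the Grassmannian `G(n,m)`. -/
def IsProjMat (n m : ℕ) (P : Matrix (Fin n) (Fin n) ℝ) : Prop :=
  P.transpose = P ∧ P * P = P ∧ P.rank = m

/-- The orthogonal projection map `π_V` associated to a projection matrix. -/
def projMap (n : ℕ) (P : Matrix (Fin n) (Fin n) ℝ) : Euc n → Euc n :=
  fun x => Matrix.toEuclideanLin P x

/-- `γ` is the natural invariant measure `γ_{n,m}` on the Grassmannian `G(n,m)` (realised as
the space of orthogonal projection matrices of rank `m`): a probability measure supported on
the rank-`m` orthogonal projections and invariant under the action of the orthogonal group. -/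
def IsGrassMeasure (n m : ℕ) (γ : Measure (Matrix (Fin n) (Fin n) ℝ)) : Prop :=
  IsProbabilityMeasure γ ∧ γ {P | IsProjMat n m P}ᶜ = 0 ∧
  ∀ A ∈ Matrix.orthogonalGroup (Fin n) ℝ,
    Measure.map (fun P => A * P * A.transpose) γ = γ
section Kernel

variable {n : ℕ} {m s t θ r : ℝ}

lemma phiK_meas (n : ℕ) (m s θ r : ℝ) : Measurable (phiK n m s θ r) := by
  unfold phiK
  refine Measurable.ite (measurableSet_lt measurable_norm measurable_const) measurable_const
    (Measurable.ite (measurableSet_lt measurable_norm measurable_const) ?_ ?_)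
  · exact (measurable_const.div measurable_norm).pow measurable_const
  · exact measurable_const.div (measurable_norm.pow measurable_const)

lemma phiK_nonneg (hr : 0 < r) (x : Euc n) : 0 ≤ phiK n m s θ r x := by
  unfold phiK
  split_ifs with h1 h2
  · norm_num
  · exact Real.rpow_nonneg (div_nonneg hr.le (norm_nonneg x)) s
  · exact div_nonneg (Real.rpow_nonneg hr.le _) (Real.rpow_nonneg (norm_nonneg x) m)

lemma phiK_le_one (hr0 : 0 < r) (hr1 : r < 1) (hθ0 : 0 < θ) (hθ1 : θ ≤ 1)
    (hs : 0 ≤ s) (hsm : s ≤ m) (x : Euc n) : phiK n m s θ r x ≤ 1 := by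
  have hrθ : (0:ℝ) < r ^ θ := Real.rpow_pos_of_pos hr0 θ
  unfold phiK
  split_ifs with h1 h2
  · exact le_refl 1
  · exact Real.rpow_le_one (div_nonneg hr0.le (norm_nonneg x))
      ((div_le_one (lt_of_lt_of_le hr0 (not_lt.1 h1))).2 (not_lt.1 h1)) hs
  · have hx : r ^ θ ≤ ‖x‖ := not_lt.1 h2
    have hx0 : 0 < ‖x‖ := lt_of_lt_of_le hrθ hx
    rw [div_le_one (Real.rpow_pos_of_pos hx0 m)]
    calc r ^ (θ * (m - s) + s) ≤ r ^ (θ * m) := by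
          apply Real.rpow_le_rpow_of_exponent_ge hr0 hr1.le
          nlinarith
      _ = (r ^ θ) ^ m := by rw [← Real.rpow_mul hr0.le]
      _ ≤ ‖x‖ ^ m := Real.rpow_le_rpow hrθ.le hx (by nlinarith)

end Kernel

section Kernel2

variable {n : ℕ} {m s t θ r R : ℝ}

lemma phiK_lower (hr0 : 0 < r) (hr1 : r < 1) (hθ0 : 0 < θ) (hθ1 : θ ≤ 1)
    (hs : 0 ≤ s) (hsm : s ≤ m) (hR : 1 ≤ R) (x : Euc n) (hx : ‖x‖ ≤ R) :
    r ^ (θ * (m - s) + s) / R ^ m ≤ phiK n m s θ r x := by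
  have hm : 0 ≤ m := hs.trans hsm
  have hA : 0 ≤ θ * (m - s) + s := by nlinarith
  have hrA : r ^ (θ * (m - s) + s) ≤ 1 := Real.rpow_le_one hr0.le hr1.le hA
  have hRm : (1:ℝ) ≤ R ^ m := Real.one_le_rpow hR hm
  have hrθ : (0:ℝ) < r ^ θ := Real.rpow_pos_of_pos hr0 θ
  unfold phiK
  split_ifs with h1 h2
  · calc r ^ (θ * (m - s) + s) / R ^ m ≤ 1 / 1 :=
        div_le_div₀ (by norm_num) hrA (by norm_num) hRm
      _ = 1 := by norm_num
  · have hx0 : 0 < ‖x‖ := lt_of_lt_of_le hr0 (not_lt.1 h1)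
    calc r ^ (θ * (m - s) + s) / R ^ m ≤ r ^ ((1 - θ) * s) / 1 := by
          apply div_le_div₀ (Real.rpow_nonneg hr0.le _) _ one_pos hRm
          apply Real.rpow_le_rpow_of_exponent_ge hr0 hr1.le
          nlinarith
      _ = (r ^ (1 - θ)) ^ s := by rw [div_one, ← Real.rpow_mul hr0.le]
      _ ≤ (r / ‖x‖) ^ s := by
          apply Real.rpow_le_rpow (Real.rpow_nonneg hr0.le _) _ hs
          rw [Real.rpow_sub hr0, Real.rpow_one]
          apply div_le_div_of_nonneg_left hr0.le hx0 h2.le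
  · have hx0 : 0 < ‖x‖ := lt_of_lt_of_le hrθ (not_lt.1 h2)
    apply div_le_div_of_nonneg_left (Real.rpow_nonneg hr0.le _)
      (Real.rpow_pos_of_pos hx0 m) (Real.rpow_le_rpow (norm_nonneg x) hx hm)

lemma phiK_anti (hr0 : 0 < r) (hr1 : r < 1) (hθ1 : θ ≤ 1) (hts : t ≤ s) (ht : 0 ≤ t)
    (x : Euc n) : phiK n m s θ r x ≤ phiK n m t θ r x := by
  unfold phiK
  split_ifs with h1 h2
  · exact le_refl 1
  · have hx0 : 0 < ‖x‖ := lt_of_lt_of_le hr0 (not_lt.1 h1)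
    exact Real.rpow_le_rpow_of_exponent_ge (div_pos hr0 hx0)
      ((div_le_one hx0).2 (not_lt.1 h1)) hts
  · have hx0 : 0 < ‖x‖ := lt_of_lt_of_le (Real.rpow_pos_of_pos hr0 θ) (not_lt.1 h2)
    rw [div_le_div_iff_of_pos_right (Real.rpow_pos_of_pos hx0 m)]
    apply Real.rpow_le_rpow_of_exponent_ge hr0 hr1.le
    nlinarith

end Kernel2

section Kernel3

variable {n : ℕ} {m s t θ r : ℝ}

lemma phiK_ratio (hr0 : 0 < r) (hr1 : r < 1) (hθ1 : θ ≤ 1) (hts : t ≤ s)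
    (x : Euc n) : r ^ ((1 - θ) * (s - t)) * phiK n m t θ r x ≤ phiK n m s θ r x := by
  have hc : 0 ≤ (1 - θ) * (s - t) := by nlinarith
  unfold phiK
  split_ifs with h1 h2
  · rw [mul_one]; exact Real.rpow_le_one hr0.le hr1.le hc
  · have hx0 : 0 < ‖x‖ := lt_of_lt_of_le hr0 (not_lt.1 h1)
    have hb : 0 < r / ‖x‖ := div_pos hr0 hx0
    have key : r ^ ((1 - θ) * (s - t)) ≤ (r / ‖x‖) ^ (s - t) := by
      rw [Real.rpow_mul hr0.le]
      apply Real.rpow_le_rpow (Real.rpow_nonneg hr0.le _) _ (by linarith)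
      rw [Real.rpow_sub hr0, Real.rpow_one]
      exact div_le_div_of_nonneg_left hr0.le hx0 h2.le
    calc r ^ ((1 - θ) * (s - t)) * (r / ‖x‖) ^ t
        ≤ (r / ‖x‖) ^ (s - t) * (r / ‖x‖) ^ t :=
          mul_le_mul_of_nonneg_right key (Real.rpow_nonneg hb.le t)
      _ = (r / ‖x‖) ^ s := by rw [← Real.rpow_add hb]; ring_nf
  · rw [mul_div_assoc', ← Real.rpow_add hr0]
    apply le_of_eq; congr 1; ring

end Kernel3

section Energy

variable {n : ℕ} {φ ψ : Euc n → ℝ} {μ : Measure (Euc n)}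

lemma integrable_shift [IsProbabilityMeasure μ] (hm : Measurable φ)
    (h0 : ∀ x, 0 ≤ φ x) (h1 : ∀ x, φ x ≤ 1) (x : Euc n) :
    Integrable (fun y => φ (x - y)) μ := by
  refine Integrable.mono' (integrable_const 1)
    ((hm.comp (measurable_const.sub measurable_id)).aestronglyMeasurable) ?_
  filter_upwards with y
  rw [Real.norm_eq_abs, abs_le]
  exact ⟨by linarith [h0 (x - y)], h1 (x - y)⟩

lemma inner_nonneg (h0 : ∀ x, 0 ≤ φ x) (x : Euc n) :
    0 ≤ ∫ y, φ (x - y) ∂μ := integral_nonneg fun y => h0 (x - y)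

lemma inner_le_one [IsProbabilityMeasure μ] (hm : Measurable φ)
    (h0 : ∀ x, 0 ≤ φ x) (h1 : ∀ x, φ x ≤ 1) (x : Euc n) :
    ∫ y, φ (x - y) ∂μ ≤ 1 := by
  calc ∫ y, φ (x - y) ∂μ ≤ ∫ _, (1:ℝ) ∂μ :=
      integral_mono_of_nonneg (Filter.Eventually.of_forall fun y => h0 (x - y))
        (integrable_const 1) (Filter.Eventually.of_forall fun y => h1 (x - y))
    _ = 1 := by simp

lemma sm_inner [IsProbabilityMeasure μ] (hm : Measurable φ) :
    StronglyMeasurable (fun x => ∫ y, φ (x - y) ∂μ) := by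
  have : StronglyMeasurable (fun p : Euc n × Euc n => φ (p.1 - p.2)) :=
    (hm.comp (measurable_fst.sub measurable_snd)).stronglyMeasurable
  exact this.integral_prod_right'

lemma integrable_inner [IsProbabilityMeasure μ] (hm : Measurable φ)
    (h0 : ∀ x, 0 ≤ φ x) (h1 : ∀ x, φ x ≤ 1) :
    Integrable (fun x => ∫ y, φ (x - y) ∂μ) μ := by
  refine Integrable.mono' (integrable_const 1) (sm_inner hm).aestronglyMeasurable ?_
  filter_upwards with x
  rw [Real.norm_eq_abs, abs_le]
  exact ⟨by linarith [inner_nonneg h0 (μ := μ) x], inner_le_one hm h0 h1 x⟩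

lemma energy_nonneg (h0 : ∀ x, 0 ≤ φ x) : 0 ≤ energy n φ μ :=
  integral_nonneg fun x => inner_nonneg h0 x

lemma energy_le_one [IsProbabilityMeasure μ] (hm : Measurable φ)
    (h0 : ∀ x, 0 ≤ φ x) (h1 : ∀ x, φ x ≤ 1) : energy n φ μ ≤ 1 := by
  calc energy n φ μ ≤ ∫ _, (1:ℝ) ∂μ :=
      integral_mono_of_nonneg (Filter.Eventually.of_forall fun x => inner_nonneg h0 x)
        (integrable_const 1) (Filter.Eventually.of_forall fun x => inner_le_one hm h0 h1 x)
    _ = 1 := by simp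

lemma energy_mono [IsProbabilityMeasure μ] (hmψ : Measurable ψ)
    (h0 : ∀ x, 0 ≤ φ x) (hle : ∀ x, φ x ≤ ψ x)
    (hψ0 : ∀ x, 0 ≤ ψ x) (hψ1 : ∀ x, ψ x ≤ 1) :
    energy n φ μ ≤ energy n ψ μ := by
  have inner_le : ∀ x, ∫ y, φ (x - y) ∂μ ≤ ∫ y, ψ (x - y) ∂μ := fun x =>
    integral_mono_of_nonneg (Filter.Eventually.of_forall fun y => h0 (x - y))
      (integrable_shift hmψ hψ0 hψ1 x) (Filter.Eventually.of_forall fun y => hle (x - y))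
  exact integral_mono_of_nonneg (Filter.Eventually.of_forall fun x => inner_nonneg h0 x)
    (integrable_inner hmψ hψ0 hψ1) (Filter.Eventually.of_forall inner_le)

lemma energy_const_mul (c : ℝ) : energy n (fun x => c * φ x) μ = c * energy n φ μ := by
  unfold energy
  simp_rw [integral_const_mul]

lemma energy_ge {E : Set (Euc n)} (hE : IsCompact E) (hEne : E.Nonempty)
    [IsProbabilityMeasure μ] (hμE : μ Eᶜ = 0) (hm : Measurable φ)
    (h0 : ∀ x, 0 ≤ φ x) (h1 : ∀ x, φ x ≤ 1) {c : ℝ} (hc : 0 ≤ c)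
    (hφc : ∀ x : Euc n, ‖x‖ ≤ diam E → c ≤ φ x) :
    c ≤ energy n φ μ := by
  have hEm : MeasurableSet E := hE.isClosed.measurableSet
  have hμE1 : (μ E).toReal = 1 := by
    have : μ E = 1 := by
      have h := measure_add_measure_compl (μ := μ) hEm
      rw [hμE, add_zero] at h
      simp [h]
    simp [this]
  have key : ∀ x ∈ E, c ≤ ∫ y, φ (x - y) ∂μ := by
    intro x hx
    have hpt : ∀ y, E.indicator (fun _ => c) y ≤ φ (x - y) := by
      intro y
      by_cases hy : y ∈ E
      · rw [Set.indicator_of_mem hy]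
        apply hφc
        rw [← dist_eq_norm]
        exact dist_le_diam_of_mem hE.isBounded hx hy
      · rw [Set.indicator_of_notMem hy]; exact h0 _
    calc c = ∫ y, E.indicator (fun _ => c) y ∂μ := by
          rw [integral_indicator_const c hEm, measureReal_def, hμE1]; simp
      _ ≤ ∫ y, φ (x - y) ∂μ :=
          integral_mono_of_nonneg
            (Filter.Eventually.of_forall fun y => Set.indicator_nonneg (fun _ _ => hc) y)
            (integrable_shift hm h0 h1 x) (Filter.Eventually.of_forall hpt)
  calc c = ∫ x, E.indicator (fun _ => c) x ∂μ := by
        rw [integral_indicator_const c hEm, measureReal_def, hμE1]; simp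
    _ ≤ energy n φ μ :=
        integral_mono_of_nonneg
          (Filter.Eventually.of_forall fun x => Set.indicator_nonneg (fun _ _ => hc) x)
          (integrable_inner hm h0 h1)
          (Filter.Eventually.of_forall fun x => by
            by_cases hx : x ∈ E
            · rw [Set.indicator_of_mem hx]; exact key x hx
            · rw [Set.indicator_of_notMem hx]; exact inner_nonneg h0 x)

end Energy

section Capacity

variable {n : ℕ}

lemma cap_core (m s t θ r : ℝ) (hr : r ∈ Set.Ioo (0:ℝ) 1) (hθ : θ ∈ Set.Ioc (0:ℝ) 1)
    (ht : 0 ≤ t) (hts : t ≤ s) (hsm : s ≤ m)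
    (E : Set (Euc n)) (hE : IsCompact E) (hEne : E.Nonempty) :
    1 ≤ capacity n m s θ r E ∧
    capacity n m s θ r E ≤ (max (diam E) 1) ^ m / r ^ (θ * (m - s) + s) ∧
    capacity n m t θ r E ≤ capacity n m s θ r E ∧
    capacity n m s θ r E ≤ capacity n m t θ r E / r ^ ((1 - θ) * (s - t)) := by
  obtain ⟨hr0, hr1⟩ := hr
  obtain ⟨hθ0, hθ1⟩ := hθ
  have hs : 0 ≤ s := ht.trans hts
  have htm : t ≤ m := hts.trans hsm
  set R : ℝ := max (diam E) 1 with hRdef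
  have hR : 1 ≤ R := le_max_right _ _
  have hR0 : 0 < R := lt_of_lt_of_le one_pos hR
  set S : ℝ → Set ℝ := fun s' =>
    { e : ℝ | ∃ μ : Measure (Euc n), PMeasOn n E μ ∧ e = energy n (phiK n m s' θ r) μ }
    with hSdef
  set A : ℝ → ℝ := fun s' => sInf (S s') with hAdef
  have hcap : ∀ s', capacity n m s' θ r E = (A s')⁻¹ := fun _ => rfl
  -- nonempty
  obtain ⟨x₀, hx₀⟩ := hEne
  have hSne : ∀ s', (S s').Nonempty := by
    intro s'
    refine ⟨energy n (phiK n m s' θ r) (Measure.dirac x₀), Measure.dirac x₀, ⟨inferInstance, ?_⟩, rfl⟩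
    rw [Measure.dirac_apply' _ hE.isClosed.measurableSet.compl]
    simp [hx₀]
  have hSbdd : ∀ s', BddBelow (S s') := by
    intro s'
    exact ⟨0, fun e ⟨μ, hμ, he⟩ => he ▸ energy_nonneg (phiK_nonneg hr0)⟩
  -- elementwise bounds
  set c : ℝ → ℝ := fun s' => r ^ (θ * (m - s') + s') / R ^ m with hcdef
  have hcpos : ∀ s', 0 < c s' :=
    fun s' => div_pos (Real.rpow_pos_of_pos hr0 _) (Real.rpow_pos_of_pos hR0 _)
  have hbound : ∀ s', 0 ≤ s' → s' ≤ m → ∀ e ∈ S s', c s' ≤ e ∧ e ≤ 1 := by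
    rintro s' hs' hs'm e ⟨μ, ⟨hp, hμE⟩, rfl⟩
    haveI := hp
    constructor
    · refine energy_ge hE ⟨x₀, hx₀⟩ hμE (phiK_meas n m s' θ r) (phiK_nonneg hr0)
        (phiK_le_one hr0 hr1 hθ0 hθ1 hs' hs'm) (hcpos s').le ?_
      intro x hx
      exact phiK_lower hr0 hr1 hθ0 hθ1 hs' hs'm hR x (hx.trans (le_max_left _ _))
    · exact energy_le_one (phiK_meas n m s' θ r) (phiK_nonneg hr0)
        (phiK_le_one hr0 hr1 hθ0 hθ1 hs' hs'm)
  have hA_ge : ∀ s', 0 ≤ s' → s' ≤ m → c s' ≤ A s' := fun s' h1 h2 =>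
    le_csInf (hSne s') fun e he => (hbound s' h1 h2 e he).1
  have hA_le_one : ∀ s', 0 ≤ s' → s' ≤ m → A s' ≤ 1 := by
    intro s' h1 h2
    obtain ⟨e, he⟩ := hSne s'
    exact csInf_le_of_le (hSbdd s') he (hbound s' h1 h2 e he).2
  have hA0 : ∀ s', 0 ≤ s' → s' ≤ m → 0 < A s' := fun s' h1 h2 =>
    lt_of_lt_of_le (hcpos s') (hA_ge s' h1 h2)
  -- A s ≤ A t
  have hAst : A s ≤ A t := by
    apply le_csInf (hSne t)
    rintro e ⟨μ, hμ, rfl⟩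
    haveI := hμ.1
    refine csInf_le_of_le (hSbdd s) ⟨μ, hμ, rfl⟩ ?_
    exact energy_mono (phiK_meas n m t θ r) (phiK_nonneg hr0)
      (phiK_anti hr0 hr1 hθ1 hts ht) (phiK_nonneg hr0)
      (phiK_le_one hr0 hr1 hθ0 hθ1 ht htm)
  -- r^((1-θ)(s-t)) * A t ≤ A s
  have hrc : 0 < r ^ ((1 - θ) * (s - t)) := Real.rpow_pos_of_pos hr0 _
  have hAratio : r ^ ((1 - θ) * (s - t)) * A t ≤ A s := by
    apply le_csInf (hSne s)
    rintro e ⟨μ, hμ, rfl⟩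
    haveI := hμ.1
    have h1 : A t ≤ energy n (phiK n m t θ r) μ := csInf_le (hSbdd t) ⟨μ, hμ, rfl⟩
    have h2 : energy n (fun x => r ^ ((1 - θ) * (s - t)) * phiK n m t θ r x) μ ≤
        energy n (phiK n m s θ r) μ :=
      energy_mono (phiK_meas n m s θ r)
        (fun x => mul_nonneg hrc.le (phiK_nonneg hr0 x))
        (phiK_ratio hr0 hr1 hθ1 hts) (phiK_nonneg hr0)
        (phiK_le_one hr0 hr1 hθ0 hθ1 hs hsm)
    rw [energy_const_mul] at h2
    calc r ^ ((1 - θ) * (s - t)) * A t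
        ≤ r ^ ((1 - θ) * (s - t)) * energy n (phiK n m t θ r) μ :=
          mul_le_mul_of_nonneg_left h1 hrc.le
      _ ≤ energy n (phiK n m s θ r) μ := h2
  -- conclusions
  refine ⟨?_, ?_, ?_, ?_⟩
  · rw [hcap]
    exact one_le_inv_iff₀.2 ⟨hA0 s hs hsm, hA_le_one s hs hsm⟩
  · rw [hcap]
    have h1 : (A s)⁻¹ ≤ (c s)⁻¹ := inv_anti₀ (hcpos s) (hA_ge s hs hsm)
    rwa [hcdef, inv_div] at h1
  · rw [hcap, hcap]
    exact inv_anti₀ (hA0 s hs hsm) hAst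
  · rw [hcap, hcap]
    have h1 : (A s)⁻¹ ≤ (r ^ ((1 - θ) * (s - t)) * A t)⁻¹ :=
      inv_anti₀ (mul_pos hrc (hA0 t ht htm)) hAratio
    rw [mul_inv] at h1
    calc (A s)⁻¹ ≤ (r ^ ((1 - θ) * (s - t)))⁻¹ * (A t)⁻¹ := h1
      _ = (A t)⁻¹ / r ^ ((1 - θ) * (s - t)) := by ring

end Capacity

section Fquot

variable {n : ℕ}

lemma F_facts (m s t θ r : ℝ) (hr : r ∈ Set.Ioo (0:ℝ) 1) (hθ : θ ∈ Set.Ioc (0:ℝ) 1)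
    (ht : 0 ≤ t) (hts : t ≤ s) (hsm : s ≤ m)
    (E : Set (Euc n)) (hE : IsCompact E) (hEne : E.Nonempty) :
    0 ≤ Cquot n m s θ E r ∧
    Cquot n m s θ E r ≤ (θ * (m - s) + s) +
      m * Real.log (max (diam E) 1) / (-Real.log r) ∧
    Cquot n m t θ E r ≤ Cquot n m s θ E r ∧
    Cquot n m s θ E r ≤ Cquot n m t θ E r + (1 - θ) * (s - t) := by
  obtain ⟨h1, h2, h3, h4⟩ := cap_core m s t θ r hr hθ ht hts hsm E hE hEne
  obtain ⟨h1t, _, _, _⟩ := cap_core m t t θ r hr hθ ht le_rfl (hts.trans hsm) E hE hEne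
  obtain ⟨hr0, hr1⟩ := hr
  have hlr : 0 < -Real.log r := by
    have := Real.log_neg hr0 hr1; linarith
  have hlrne : Real.log r ≠ 0 := by intro h; rw [h] at hlr; simp at hlr
  set R : ℝ := max (diam E) 1 with hRdef
  have hR : 1 ≤ R := le_max_right _ _
  have hR0 : 0 < R := lt_of_lt_of_le one_pos hR
  have hcs : 0 < capacity n m s θ r E := lt_of_lt_of_le one_pos h1
  have hct : 0 < capacity n m t θ r E := lt_of_lt_of_le one_pos h1t
  have hlogs : 0 ≤ Real.log (capacity n m s θ r E) := Real.log_nonneg h1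
  refine ⟨div_nonneg hlogs hlr.le, ?_, ?_, ?_⟩
  · -- upper bound
    have key : Real.log (capacity n m s θ r E) ≤
        (θ * (m - s) + s) * (-Real.log r) + m * Real.log R := by
      calc Real.log (capacity n m s θ r E)
          ≤ Real.log (R ^ m / r ^ (θ * (m - s) + s)) := Real.log_le_log hcs h2
        _ = m * Real.log R - (θ * (m - s) + s) * Real.log r := by
            rw [Real.log_div (by positivity) (by positivity), Real.log_rpow hR0,
              Real.log_rpow hr0]
        _ = (θ * (m - s) + s) * (-Real.log r) + m * Real.log R := by ring
    calc Cquot n m s θ E r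
        ≤ ((θ * (m - s) + s) * (-Real.log r) + m * Real.log R) / (-Real.log r) := by
          unfold Cquot
          exact div_le_div_of_nonneg_right key hlr.le
      _ = (θ * (m - s) + s) + m * Real.log R / (-Real.log r) := by
          field_simp [hlrne]; ring
  · unfold Cquot
    apply div_le_div_of_nonneg_right _ hlr.le
    exact Real.log_le_log hct h3
  · have key : Real.log (capacity n m s θ r E) ≤
        Real.log (capacity n m t θ r E) + (1 - θ) * (s - t) * (-Real.log r) := by
      calc Real.log (capacity n m s θ r E)
          ≤ Real.log (capacity n m t θ r E / r ^ ((1 - θ) * (s - t))) :=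
            Real.log_le_log hcs h4
        _ = Real.log (capacity n m t θ r E) - (1 - θ) * (s - t) * Real.log r := by
            rw [Real.log_div (ne_of_gt hct) (by positivity), Real.log_rpow hr0]
        _ = Real.log (capacity n m t θ r E) + (1 - θ) * (s - t) * (-Real.log r) := by ring
    calc Cquot n m s θ E r
        ≤ (Real.log (capacity n m t θ r E) + (1 - θ) * (s - t) * (-Real.log r)) /
            (-Real.log r) := by
          unfold Cquot
          exact div_le_div_of_nonneg_right key hlr.le
      _ = Cquot n m t θ E r + (1 - θ) * (s - t) := by
          unfold Cquot; field_simp [hlrne]; ring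

end Fquot

section FixedPoint

lemma fixed_point_unique (G : ℝ → ℝ) (M : ℝ) (hM : 0 ≤ M) (θ : ℝ) (hθ0 : 0 < θ)
    (hmono : ∀ t s : ℝ, 0 ≤ t → t ≤ s → s ≤ M → G t ≤ G s ∧ G s ≤ G t + (1 - θ) * (s - t))
    (h0 : 0 ≤ G 0) (hMval : G M ≤ M) :
    ∃! s : ℝ, s ∈ Set.Icc (0:ℝ) M ∧ G s = s := by
  set H : ℝ → ℝ := fun s => G s - s with hHdef
  have hH2 : ∀ t s : ℝ, 0 ≤ t → t ≤ s → s ≤ M → θ * (s - t) ≤ H t - H s ∧ H t - H s ≤ s - t := by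
    intro t s h1 h2 h3
    obtain ⟨ha, hb⟩ := hmono t s h1 h2 h3
    constructor <;> simp only [hHdef] <;> nlinarith
  have hlip : LipschitzOnWith 1 H (Set.Icc (0:ℝ) M) := by
    apply LipschitzOnWith.of_dist_le_mul
    intro x hx y hy
    rw [Real.dist_eq, Real.dist_eq, NNReal.coe_one, one_mul, abs_le]
    rcases le_total x y with h | h
    · obtain ⟨h1, h2⟩ := hH2 x y hx.1 h hy.2
      rw [abs_of_nonpos (by linarith : x - y ≤ 0)]
      constructor <;> nlinarith
    · obtain ⟨h1, h2⟩ := hH2 y x hy.1 h hx.2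
      rw [abs_of_nonneg (by linarith : 0 ≤ x - y)]
      constructor <;> nlinarith
  have hcont : ContinuousOn H (Set.Icc (0:ℝ) M) := hlip.continuousOn
  have hmem : (0:ℝ) ∈ Set.Icc (H M) (H 0) := by
    constructor
    · simp only [hHdef]; linarith
    · simp only [hHdef]; linarith
  obtain ⟨s, hs, hHs⟩ := intermediate_value_Icc' hM hcont hmem
  refine ⟨s, ⟨hs, by simp only [hHdef] at hHs; linarith⟩, ?_⟩
  rintro y ⟨hy, hGy⟩
  have hHy : H y = 0 := by simp only [hHdef]; linarith
  rcases le_total y s with h | h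
  · have := (hH2 y s hy.1 h hs.2).1
    nlinarith
  · have := (hH2 s y hs.1 h hy.2).1
    nlinarith

end FixedPoint

/-- Lipschitz-type bounds in `s` for `log C_{r,θ}^{s,m}(E)/(-log r) - s`, and
uniqueness of the fixed points `s` of the lower/upper limits of `log C_{r,θ}^{s,m}(E)/(-log r)`. -/
theorem statement4 (n m : ℕ) (hm1 : 1 ≤ m) (hmn : m ≤ n)
    (E : Set (Euc n)) (hE : IsCompact E) (hEne : E.Nonempty)
    (θ : ℝ) (hθ : θ ∈ Ioc (0:ℝ) 1) :
    (∀ r : ℝ, r ∈ Ioo (0:ℝ) 1 → ∀ s t : ℝ, 0 ≤ t → t ≤ s → s ≤ m →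
      -(s - t) ≤ (Cquot n m s θ E r - s) - (Cquot n m t θ E r - t) ∧
        (Cquot n m s θ E r - s) - (Cquot n m t θ E r - t) ≤ -(θ * (s - t))) ∧
    (∃! s : ℝ, s ∈ Icc (0:ℝ) m ∧ liminf (fun r => Cquot n m s θ E r) (𝓝[>] 0) = s) ∧
    (∃! s : ℝ, s ∈ Icc (0:ℝ) m ∧ limsup (fun r => Cquot n m s θ E r) (𝓝[>] 0) = s) := by
  obtain ⟨hθ0, hθ1⟩ := hθ
  have hm0 : (0:ℝ) ≤ (m:ℝ) := Nat.cast_nonneg m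
  set R : ℝ := max (diam E) 1 with hRdef
  have hR : 1 ≤ R := le_max_right _ _
  have hlogR : 0 ≤ Real.log R := Real.log_nonneg hR
  set l : Filter ℝ := 𝓝[>] (0:ℝ) with hldef
  set F : ℝ → ℝ → ℝ := fun s r => Cquot n m s θ E r with hFdef
  -- part (i)
  have part1 : ∀ r : ℝ, r ∈ Ioo (0:ℝ) 1 → ∀ s t : ℝ, 0 ≤ t → t ≤ s → s ≤ m →
      -(s - t) ≤ (F s r - s) - (F t r - t) ∧
        (F s r - s) - (F t r - t) ≤ -(θ * (s - t)) := by
    intro r hr s t ht hts hsm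
    obtain ⟨_, _, h3, h4⟩ := F_facts (m:ℝ) s t θ r hr ⟨hθ0, hθ1⟩ ht hts hsm E hE hEne
    constructor <;> [skip; skip] <;> simp only [hFdef] <;> nlinarith
  -- eventual facts
  have hEv : ∀ᶠ r in l, r ∈ Set.Ioo (0:ℝ) 1 ∧ 1 ≤ -Real.log r := by
    have hmem : Set.Ioo (0:ℝ) (Real.exp (-1)) ∈ l :=
      Ioo_mem_nhdsGT_of_mem ⟨le_refl 0, Real.exp_pos _⟩
    filter_upwards [hmem] with r hr
    have hr0 : 0 < r := hr.1
    have hre : r < Real.exp (-1) := hr.2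
    have h1 : Real.exp (-1) < 1 := by
      rw [← Real.exp_zero]; exact Real.exp_lt_exp.2 (by norm_num)
    have hlog : Real.log r < -1 := by
      calc Real.log r < Real.log (Real.exp (-1)) := Real.log_lt_log hr0 hre
        _ = -1 := Real.log_exp _
    exact ⟨⟨hr0, hre.trans h1⟩, by linarith⟩
  set K : ℝ := (m:ℝ) + (m:ℝ) * Real.log R with hKdef
  have hub : ∀ s : ℝ, 0 ≤ s → s ≤ m → ∀ᶠ r in l, F s r ≤ K := by
    intro s hs hsm
    filter_upwards [hEv] with r hr
    obtain ⟨hrm, hlr1⟩ := hr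
    obtain ⟨_, h2, _, _⟩ := F_facts (m:ℝ) s s θ r hrm ⟨hθ0, hθ1⟩ hs le_rfl hsm E hE hEne
    have hdle : (m:ℝ) * Real.log R / (-Real.log r) ≤ (m:ℝ) * Real.log R :=
      div_le_self (by positivity) hlr1
    have hexp : θ * ((m:ℝ) - s) + s ≤ (m:ℝ) := by nlinarith
    simp only [hFdef, hKdef] at *
    linarith
  have hlb : ∀ s : ℝ, 0 ≤ s → s ≤ m → ∀ᶠ r in l, 0 ≤ F s r := by
    intro s hs hsm
    filter_upwards [hEv] with r hr
    exact (F_facts (m:ℝ) s s θ r hr.1 ⟨hθ0, hθ1⟩ hs le_rfl hsm E hE hEne).1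
  have hbdd_le : ∀ s : ℝ, 0 ≤ s → s ≤ m → IsBoundedUnder (· ≤ ·) l (F s) :=
    fun s hs hsm => ⟨K, eventually_map.2 (hub s hs hsm)⟩
  have hbdd_ge : ∀ s : ℝ, 0 ≤ s → s ≤ m → IsBoundedUnder (· ≥ ·) l (F s) :=
    fun s hs hsm => ⟨0, eventually_map.2 (hlb s hs hsm)⟩
  have hbdd_le' : ∀ t s : ℝ, 0 ≤ t → t ≤ m →
      IsBoundedUnder (· ≤ ·) l (fun r => F t r + (1 - θ) * (s - t)) := by
    intro t s ht htm
    refine ⟨K + (1 - θ) * (s - t), eventually_map.2 ?_⟩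
    filter_upwards [hub t ht htm] with r hr
    linarith
  have hmono_ev : ∀ t s : ℝ, 0 ≤ t → t ≤ s → s ≤ m → ∀ᶠ r in l, F t r ≤ F s r := by
    intro t s ht hts hsm
    filter_upwards [hEv] with r hr
    exact (F_facts (m:ℝ) s t θ r hr.1 ⟨hθ0, hθ1⟩ ht hts hsm E hE hEne).2.2.1
  have hlip_ev : ∀ t s : ℝ, 0 ≤ t → t ≤ s → s ≤ m →
      ∀ᶠ r in l, F s r ≤ F t r + (1 - θ) * (s - t) := by
    intro t s ht hts hsm
    filter_upwards [hEv] with r hr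
    exact (F_facts (m:ℝ) s t θ r hr.1 ⟨hθ0, hθ1⟩ ht hts hsm E hE hEne).2.2.2
  have htv : Tendsto (fun r : ℝ => (m:ℝ) + (m:ℝ) * Real.log R * (-Real.log r)⁻¹) l
      (𝓝 ((m:ℝ))) := by
    have h1 : Tendsto (fun r : ℝ => -Real.log r) l atTop := by
      have := Real.tendsto_log_nhdsGT_zero
      exact tendsto_neg_atBot_atTop.comp this
    have h2 : Tendsto (fun r : ℝ => (-Real.log r)⁻¹) l (𝓝 0) := h1.inv_tendsto_atTop
    have h3 : Tendsto (fun r : ℝ => (m:ℝ) * Real.log R * (-Real.log r)⁻¹) l (𝓝 0) := by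
      simpa using h2.const_mul ((m:ℝ) * Real.log R)
    simpa using tendsto_const_nhds.add h3
  have hm_ev : ∀ᶠ r in l, F (m:ℝ) r ≤ (m:ℝ) + (m:ℝ) * Real.log R * (-Real.log r)⁻¹ := by
    filter_upwards [hEv] with r hr
    obtain ⟨_, h2, _, _⟩ := F_facts (m:ℝ) (m:ℝ) (m:ℝ) θ r hr.1 ⟨hθ0, hθ1⟩ hm0 le_rfl le_rfl
      E hE hEne
    simp only [hFdef]
    calc Cquot n (↑m) (↑m) θ E r ≤ (θ * ((m:ℝ) - (m:ℝ)) + (m:ℝ)) +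
          (m:ℝ) * Real.log R / (-Real.log r) := h2
      _ = (m:ℝ) + (m:ℝ) * Real.log R * (-Real.log r)⁻¹ := by ring
  refine ⟨part1, ?_, ?_⟩
  · -- liminf case
    set L : ℝ → ℝ := fun s => liminf (F s) l with hLdef
    have hLmono : ∀ t s : ℝ, 0 ≤ t → t ≤ s → s ≤ m →
        L t ≤ L s ∧ L s ≤ L t + (1 - θ) * (s - t) := by
      intro t s ht hts hsm
      have htm : t ≤ m := hts.trans hsm
      have hs : 0 ≤ s := ht.trans hts
      constructor
      · exact liminf_le_liminf (hmono_ev t s ht hts hsm) (hbdd_ge t ht htm)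
          ((hbdd_le s hs hsm).isCoboundedUnder_ge)
      · have h1 : L s ≤ liminf (fun r => F t r + (1 - θ) * (s - t)) l :=
          liminf_le_liminf (hlip_ev t s ht hts hsm) (hbdd_ge s hs hsm)
            ((hbdd_le' t s ht htm).isCoboundedUnder_ge)
        have h2 : liminf (fun r => F t r + (1 - θ) * (s - t)) l =
            L t + (1 - θ) * (s - t) :=
          liminf_add_const l (F t) _ ((hbdd_le t ht htm).isCoboundedUnder_ge)
            (hbdd_ge t ht htm)
        rw [h2] at h1; exact h1
    have hL0 : 0 ≤ L 0 :=
      le_liminf_of_le ((hbdd_le 0 le_rfl hm0).isCoboundedUnder_ge) (hlb 0 le_rfl hm0)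
    have hLm : L (m:ℝ) ≤ (m:ℝ) := by
      have h1 : L (m:ℝ) ≤ liminf (fun r : ℝ =>
          (m:ℝ) + (m:ℝ) * Real.log R * (-Real.log r)⁻¹) l :=
        liminf_le_liminf hm_ev (hbdd_ge (m:ℝ) hm0 le_rfl)
          (htv.isBoundedUnder_le.isCoboundedUnder_ge)
      rwa [htv.liminf_eq] at h1
    exact fixed_point_unique L (m:ℝ) hm0 θ hθ0 hLmono hL0 hLm
  · -- limsup case
    set U : ℝ → ℝ := fun s => limsup (F s) l with hUdef
    have hUmono : ∀ t s : ℝ, 0 ≤ t → t ≤ s → s ≤ m →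
        U t ≤ U s ∧ U s ≤ U t + (1 - θ) * (s - t) := by
      intro t s ht hts hsm
      have htm : t ≤ m := hts.trans hsm
      have hs : 0 ≤ s := ht.trans hts
      constructor
      · exact limsup_le_limsup (hmono_ev t s ht hts hsm)
          ((hbdd_ge t ht htm).isCoboundedUnder_le) (hbdd_le s hs hsm)
      · have h1 : U s ≤ limsup (fun r => F t r + (1 - θ) * (s - t)) l :=
          limsup_le_limsup (hlip_ev t s ht hts hsm)
            ((hbdd_ge s hs hsm).isCoboundedUnder_le) (hbdd_le' t s ht htm)
        have h2 : limsup (fun r => F t r + (1 - θ) * (s - t)) l =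
            U t + (1 - θ) * (s - t) :=
          limsup_add_const l (F t) _ (hbdd_le t ht htm)
            ((hbdd_ge t ht htm).isCoboundedUnder_le)
        rw [h2] at h1; exact h1
    have hU0 : 0 ≤ U 0 := by
      have h1 : liminf (F 0) l ≤ U 0 :=
        liminf_le_limsup (hbdd_le 0 le_rfl hm0) (hbdd_ge 0 le_rfl hm0)
      have h2 : (0:ℝ) ≤ liminf (F 0) l :=
        le_liminf_of_le ((hbdd_le 0 le_rfl hm0).isCoboundedUnder_ge) (hlb 0 le_rfl hm0)
      linarith
    have hUm : U (m:ℝ) ≤ (m:ℝ) := by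
      have h1 : U (m:ℝ) ≤ limsup (fun r : ℝ =>
          (m:ℝ) + (m:ℝ) * Real.log R * (-Real.log r)⁻¹) l :=
        limsup_le_limsup hm_ev ((hbdd_ge (m:ℝ) hm0 le_rfl).isCoboundedUnder_le)
          htv.isBoundedUnder_le
      rwa [htv.limsup_eq] at h1
    exact fixed_point_unique U (m:ℝ) hm0 θ hθ0 hUmono hU0 hUm
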